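/- Let n be an integer with n ≡ 2 (mod 4) and n ≥ 2, and let m be an integer with m ≥ 3n + 1. Then C(n, m) is the full symmetric group S_m; equivalently, every adjacent transposition (i, i+1), for 1 ≤ i ≤ m − 1, is a product of n-crossing permutations over S_m. -/
import Mathlib


/-- The underlying function of the `n`-crossing permutation `π_j` over `{1, …, m}` (as a
function on `ℕ`): it sends `j + k` to `j + n - 1 - k` for `0 ≤ k ≤ n - 1` and fixes all
other points. -/
def crossFun (n j i : ℕ) : ℕ :=
  if j ≤ i ∧ i < j + n then 2 * j + n - 1 - i else i

lemma crossFun_involutive (n j : ℕ) : Function.Involutive (crossFun n j) := by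
  intro i
  unfold crossFun
  split_ifs <;> omega

/-- The `n`-crossing permutation `π_j`, viewed as a permutation of `ℕ` fixing every point
outside `{j, …, j + n - 1}`. -/
def crossPerm (n j : ℕ) : Equiv.Perm ℕ :=
  Function.Involutive.toPerm _ (crossFun_involutive n j)

/-- `C n m` is the subgroup of the symmetric group `S_m` (realized as permutations of `ℕ`
supported on `{1, …, m}`) generated by the `n`-crossing permutations `π_1, …, π_{m-n+1}`. -/
def C (n m : ℕ) : Subgroup (Equiv.Perm ℕ) :=
  Subgroup.closure {σ | ∃ j, 1 ≤ j ∧ j ≤ m - n + 1 ∧ σ = crossPerm n j}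

lemma crossPerm_apply (n j x : ℕ) : crossPerm n j x = crossFun n j x := rfl

lemma crossPerm_inv (n j : ℕ) : (crossPerm n j)⁻¹ = crossPerm n j := rfl

lemma mem_cross {n m : ℕ} (hnm : n ≤ m) {j : ℕ} (h1 : 1 ≤ j) (h2 : j + n ≤ m + 1) :
    crossPerm n j ∈ C n m :=
  Subgroup.subset_closure ⟨j, h1, by omega, rfl⟩

def cyc (a b c : ℕ) : Equiv.Perm ℕ := Equiv.swap a c * Equiv.swap a b

lemma conj_swap (g : Equiv.Perm ℕ) (u v : ℕ) :
    g * Equiv.swap u v * g⁻¹ = Equiv.swap (g u) (g v) :=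
  (Equiv.swap_apply_apply g u v).symm

lemma conj_mul' (g u v : Equiv.Perm ℕ) :
    g * (u * v) * g⁻¹ = (g * u * g⁻¹) * (g * v * g⁻¹) := by group

lemma conj_cyc (g : Equiv.Perm ℕ) (a b c : ℕ) :
    g * cyc a b c * g⁻¹ = cyc (g a) (g b) (g c) := by
  unfold cyc
  rw [conj_mul', conj_swap, conj_swap]

lemma cyc_inv {a b c : ℕ} (hab : a ≠ b) (hac : a ≠ c) (hbc : b ≠ c) :
    (cyc a b c)⁻¹ = cyc c b a := by
  symm
  apply eq_inv_of_mul_eq_one_left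
  ext x
  simp only [cyc, Equiv.Perm.mul_apply, Equiv.swap_apply_def, Equiv.Perm.one_apply]
  split_ifs <;> omega

lemma conj_mem_iff {G : Type*} [Group G] (H : Subgroup G) {g : G} (hg : g ∈ H) (u : G) :
    g * u * g⁻¹ ∈ H ↔ u ∈ H := by
  rw [H.mul_mem_cancel_right (inv_mem hg), H.mul_mem_cancel_left hg]

lemma cword (n : ℕ) (hn2 : 2 ≤ n) (j : ℕ) (hj : 1 ≤ j) :
    crossPerm n j * crossPerm n (j+1) * crossPerm n (j+2) * crossPerm n (j+1)
      = cyc j (j+n-1) (j+n+1) := by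
  ext x
  simp only [Equiv.Perm.mul_apply, crossPerm_apply, crossFun, cyc, Equiv.swap_apply_def]
  split_ifs <;> omega

section Main
variable {n m : ℕ}

lemma conj_step (hnm : n ≤ m) {l a b c a' b' c' : ℕ} (hl1 : 1 ≤ l) (hl2 : l + n ≤ m + 1)
    (ha : crossFun n l a = a') (hb : crossFun n l b = b') (hc : crossFun n l c = c')
    (hmem : cyc a b c ∈ C n m) : cyc a' b' c' ∈ C n m := by
  have key : crossPerm n l * cyc a b c * (crossPerm n l)⁻¹ = cyc a' b' c' := by
    rw [conj_cyc, show crossPerm n l a = a' from ha, show crossPerm n l b = b' from hb,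
        show crossPerm n l c = c' from hc]
  rw [← key]
  exact mul_mem (mul_mem (mem_cross hnm hl1 hl2) hmem) (inv_mem (mem_cross hnm hl1 hl2))

lemma seed_mem (hn : n % 4 = 2) (hn6 : 6 ≤ n) (hm : 3*n+1 ≤ m) :
    cyc (n+1) (n+2) (n+3) ∈ C n m := by
  have hnm : n ≤ m := by omega
  have hc1 : cyc 1 n (n+2) ∈ C n m := by
    have h := cword n (by omega) 1 le_rfl
    have e1 : 1 + n - 1 = n := by omega
    have e2 : 1 + n + 1 = n + 2 := by omega
    rw [e1, e2] at h
    rw [← h]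
    exact mul_mem (mul_mem (mul_mem (mem_cross hnm (by omega) (by omega))
      (mem_cross hnm (by omega) (by omega))) (mem_cross hnm (by omega) (by omega)))
      (mem_cross hnm (by omega) (by omega))
  have h1 : cyc 1 (n+1) (n-1) ∈ C n m := by
    refine conj_step hnm (l := n/2+1) (by omega) (by omega) ?_ ?_ ?_ hc1 <;>
      (unfold crossFun; split_ifs <;> omega)
  have h2 : cyc n (n+1) 2 ∈ C n m := by
    refine conj_step hnm (l := 1) (by omega) (by omega) ?_ ?_ ?_ h1 <;>
      (unfold crossFun; split_ifs <;> omega)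
  have h3 : cyc (n+3) (n+2) 2 ∈ C n m := by
    refine conj_step hnm (l := n/2+2) (by omega) (by omega) ?_ ?_ ?_ h2 <;>
      (unfold crossFun; split_ifs <;> omega)
  have h4 : cyc (n+3) (n+2) (n+1) ∈ C n m := by
    refine conj_step hnm (l := 2) (by omega) (by omega) ?_ ?_ ?_ h3 <;>
      (unfold crossFun; split_ifs <;> omega)
  have : cyc (n+1) (n+2) (n+3) = (cyc (n+3) (n+2) (n+1))⁻¹ := by
    rw [cyc_inv (by omega) (by omega) (by omega)]
  rw [this]
  exact inv_mem h4


def tc (x : ℕ) : Equiv.Perm ℕ := cyc x (x+1) (x+2)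

lemma Tstep (hn6 : 6 ≤ n) (hm : 3*n+1 ≤ m) {x : ℕ} (hx : 1 ≤ x) (hxm : x + 4 ≤ m) :
    tc x ∈ C n m ↔ tc (x+2) ∈ C n m := by
  have hnm : n ≤ m := by omega
  set l := max 1 (x+4-n) with hl
  have hg : crossPerm n (l+1) * crossPerm n l ∈ C n m :=
    mul_mem (mem_cross hnm (by omega) (by omega)) (mem_cross hnm (by omega) (by omega))
  have e1 : (crossPerm n (l+1) * crossPerm n l) x = x + 2 := by
    simp only [Equiv.Perm.mul_apply, crossPerm_apply, crossFun]; split_ifs <;> omega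
  have e2 : (crossPerm n (l+1) * crossPerm n l) (x+1) = x + 2 + 1 := by
    simp only [Equiv.Perm.mul_apply, crossPerm_apply, crossFun]; split_ifs <;> omega
  have e3 : (crossPerm n (l+1) * crossPerm n l) (x+2) = x + 2 + 2 := by
    simp only [Equiv.Perm.mul_apply, crossPerm_apply, crossFun]; split_ifs <;> omega
  have key : (crossPerm n (l+1) * crossPerm n l) * tc x * (crossPerm n (l+1) * crossPerm n l)⁻¹
      = tc (x+2) := by
    unfold tc
    rw [conj_cyc, e1, e2, e3]
  rw [← key]
  exact (conj_mem_iff _ hg _).symm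

lemma Taux (hn6 : 6 ≤ n) (hm : 3*n+1 ≤ m) :
    ∀ d x, 1 ≤ x → x + 2*d + 2 ≤ m → (tc x ∈ C n m ↔ tc (x+2*d) ∈ C n m) := by
  intro d
  induction d with
  | zero => intro x hx hxm; simp
  | succ d ih =>
    intro x hx hxm
    have h1 := Tstep hn6 hm (x := x) hx (by omega)
    have h2 := ih (x+2) (by omega) (by omega)
    have e : x + 2 + 2*d = x + 2*(d+1) := by omega
    rw [e] at h2
    exact h1.trans h2

lemma tcyc_all (hn : n % 4 = 2) (hn6 : 6 ≤ n) (hm : 3*n+1 ≤ m) :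
    ∀ x, 1 ≤ x → x + 2 ≤ m → tc x ∈ C n m := by
  have hnm : n ≤ m := by omega
  have seedO : tc (n+1) ∈ C n m := by
    have h := seed_mem hn hn6 hm
    unfold tc
    rw [show n+1+1 = n+2 by omega, show n+1+2 = n+3 by omega]
    exact h
  have seedE : tc 4 ∈ C n m := by
    have h : cyc 6 5 4 ∈ C n m := by
      refine conj_step hnm (l := 4) (a := n+1) (b := n+2) (c := n+3) (by omega) (by omega) ?_ ?_ ?_ ?_
      · unfold crossFun; split_ifs <;> omega
      · unfold crossFun; split_ifs <;> omega
      · unfold crossFun; split_ifs <;> omega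
      · have h := seed_mem hn hn6 hm
        exact h
    have : tc 4 = (cyc 6 5 4)⁻¹ := by
      rw [cyc_inv (by omega) (by omega) (by omega)]
      unfold tc
      norm_num
    rw [this]
    exact inv_mem h
  intro x hx1 hx2
  rcases Nat.even_or_odd x with he | ho
  · obtain ⟨t, ht⟩ := he
    rcases le_or_gt 4 x with h4 | h4
    · have h := (Taux hn6 hm ((x-4)/2) 4 (by omega) (by omega)).1 seedE
      rw [show 4 + 2*((x-4)/2) = x by omega] at h
      exact h
    · have hx4 : x = 2 := by omega
      subst hx4
      have h := (Taux hn6 hm 1 2 (by omega) (by omega)).2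
      rw [show 2 + 2*1 = 4 by omega] at h
      exact h seedE
  · obtain ⟨t, ht⟩ := ho
    rcases le_or_gt (n+1) x with h4 | h4
    · have h := (Taux hn6 hm ((x-(n+1))/2) (n+1) (by omega) (by omega)).1 seedO
      rw [show n + 1 + 2*((x-(n+1))/2) = x by omega] at h
      exact h
    · have h := (Taux hn6 hm ((n+1-x)/2) x (by omega) (by omega)).2
      rw [show x + 2*((n+1-x)/2) = n+1 by omega] at h
      exact h seedO


lemma tc_apply (a x : ℕ) : tc a x =
    if x = a then a+1 else if x = a+1 then a+2 else if x = a+2 then a else x := by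
  simp only [tc, cyc, Equiv.Perm.mul_apply, Equiv.swap_apply_def]
  split_ifs <;> omega

def tcr (a : ℕ) : Equiv.Perm ℕ := cyc (a+2) (a+1) a

lemma tcr_apply (a x : ℕ) : tcr a x =
    if x = a then a+2 else if x = a+1 then a else if x = a+2 then a+1 else x := by
  simp only [tcr, cyc, Equiv.Perm.mul_apply, Equiv.swap_apply_def]
  split_ifs <;> omega

lemma tcr_eq_inv (a : ℕ) : tcr a = (tc a)⁻¹ := by
  unfold tcr tc
  rw [show a+1+1 = a+2 by omega] at *
  rw [cyc_inv (by omega) (by omega) (by omega)]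

lemma rev4 (a : ℕ) :
    Equiv.swap a (a+3) * Equiv.swap (a+1) (a+2) = tc a * (tc (a+1))⁻¹ * tc a := by
  rw [mul_assoc, ← tcr_eq_inv]
  have u_apply : ∀ x, (tcr (a+1) * tc a) x =
      if x = a then a+3 else if x = a+2 then a else if x = a+3 then a+2 else x := by
    intro x
    simp only [Equiv.Perm.mul_apply, tc_apply, tcr_apply]
    split_ifs <;> omega
  ext x
  rw [Equiv.Perm.mul_apply, Equiv.Perm.mul_apply, u_apply, tc_apply]
  simp only [Equiv.swap_apply_def]
  split_ifs <;> omega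

lemma nest (hn : n % 4 = 2) (hn6 : 6 ≤ n) (hm : 3*n+1 ≤ m) :
    ∀ d a, 1 ≤ a → a + 2*d + 3 ≤ m →
      Equiv.swap a (a+2*d+3) * Equiv.swap (a+1) (a+2*d+2) ∈ C n m := by
  intro d
  induction d with
  | zero =>
    intro a ha ham
    rw [show a+2*0+3 = a+3 by omega, show a+2*0+2 = a+2 by omega, rev4 a]
    exact mul_mem (mul_mem (tcyc_all hn hn6 hm a ha (by omega))
      (inv_mem (tcyc_all hn hn6 hm (a+1) (by omega) (by omega))))
      (tcyc_all hn hn6 hm a ha (by omega))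
  | succ d ih =>
    intro a ha ham
    set g : Equiv.Perm ℕ := tcr a * tc (a+2*d+3) with hg
    have hgmem : g ∈ C n m := by
      rw [hg, tcr_eq_inv]
      exact mul_mem (inv_mem (tcyc_all hn hn6 hm a ha (by omega)))
        (tcyc_all hn hn6 hm (a+2*d+3) (by omega) (by omega))
    have e1 : g (a+1) = a := by
      rw [hg, Equiv.Perm.mul_apply, tc_apply, tcr_apply]
      split_ifs <;> omega
    have e2 : g (a+1+2*d+3) = a+2*(d+1)+3 := by
      rw [hg, Equiv.Perm.mul_apply, tc_apply, tcr_apply]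
      split_ifs <;> omega
    have e3 : g (a+1+1) = a+1 := by
      rw [hg, Equiv.Perm.mul_apply, tc_apply, tcr_apply]
      split_ifs <;> omega
    have e4 : g (a+1+2*d+2) = a+2*(d+1)+2 := by
      rw [hg, Equiv.Perm.mul_apply, tc_apply, tcr_apply]
      split_ifs <;> omega
    have key : g * (Equiv.swap (a+1) (a+1+2*d+3) * Equiv.swap (a+1+1) (a+1+2*d+2)) * g⁻¹
        = Equiv.swap a (a+2*(d+1)+3) * Equiv.swap (a+1) (a+2*(d+1)+2) := by
      rw [conj_mul', conj_swap, conj_swap, e1, e2, e3, e4]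
    rw [← key]
    exact (conj_mem_iff _ hgmem _).2 (ih (a+1) (by omega) (by omega))

def partRev (n j : ℕ) : ℕ → Equiv.Perm ℕ
  | 0 => 1
  | t+1 => partRev n j t * (Equiv.swap (j+2*t) (j+n-1-2*t) * Equiv.swap (j+2*t+1) (j+n-2-2*t))

lemma partRev_apply {j : ℕ} (hj : 1 ≤ j) :
    ∀ t, 4*t + 2 ≤ n → ∀ x, partRev n j t x =
      if (j ≤ x ∧ x < j+2*t) ∨ (j+n-2*t ≤ x ∧ x < j+n) then 2*j+n-1-x else x := by
  intro t
  induction t with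
  | zero =>
    intro h4 x
    simp only [partRev, Equiv.Perm.one_apply]
    split_ifs <;> omega
  | succ t ih =>
    intro h4 x
    simp only [partRev, Equiv.Perm.mul_apply]
    rw [ih (by omega)]
    simp only [Equiv.swap_apply_def]
    split_ifs <;> omega

lemma partRev_mem (hn : n % 4 = 2) (hm : 3*n+1 ≤ m) {j : ℕ} (hj : 1 ≤ j)
    (hjm : j + n ≤ m + 1) : ∀ t, 4*t + 2 ≤ n → partRev n j t ∈ C n m := by
  intro t
  induction t with
  | zero => exact fun _ => one_mem _
  | succ t ih =>
    intro h4
    have step : partRev n j (t+1) = partRev n j t *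
        (Equiv.swap (j+2*t) (j+n-1-2*t) * Equiv.swap (j+2*t+1) (j+n-2-2*t)) := rfl
    rw [step]
    refine mul_mem (ih (by omega)) ?_
    have e1 : j+n-1-2*t = (j+2*t)+2*((n-4*t-4)/2)+3 := by omega
    have e2 : j+n-2-2*t = (j+2*t)+2*((n-4*t-4)/2)+2 := by omega
    rw [e1, e2]
    exact nest hn (by omega) hm ((n-4*t-4)/2) (j+2*t) (by omega) (by omega)

lemma fin_swap (hn : n % 4 = 2) {j : ℕ} (hj : 1 ≤ j) :
    partRev n j ((n-2)/4) * crossPerm n j = Equiv.swap (j + (n-2)/2) (j + n/2) := by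
  ext x
  simp only [Equiv.Perm.mul_apply, crossPerm_apply]
  rw [partRev_apply hj ((n-2)/4) (by omega)]
  simp only [crossFun, Equiv.swap_apply_def]
  split_ifs <;> omega

lemma swap_seed (hn : n % 4 = 2) (hm : 3*n+1 ≤ m) {j : ℕ} (hj : 1 ≤ j)
    (hjm : j + n ≤ m + 1) : Equiv.swap (j + (n-2)/2) (j + n/2) ∈ C n m := by
  rw [← fin_swap hn hj]
  exact mul_mem (partRev_mem hn hm hj hjm ((n-2)/4) (by omega))
    (mem_cross (by omega) hj hjm)


lemma SWstep (hn6 : 6 ≤ n) (hm : 3*n+1 ≤ m) {x : ℕ} (hx : 1 ≤ x) (hxm : x + 3 ≤ m) :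
    (Equiv.swap x (x+1) ∈ C n m ↔ Equiv.swap (x+2) (x+2+1) ∈ C n m) := by
  have hnm : n ≤ m := by omega
  set l := max 1 (x+3-n) with hl
  have hg : crossPerm n (l+1) * crossPerm n l ∈ C n m :=
    mul_mem (mem_cross hnm (by omega) (by omega)) (mem_cross hnm (by omega) (by omega))
  have e1 : (crossPerm n (l+1) * crossPerm n l) x = x + 2 := by
    simp only [Equiv.Perm.mul_apply, crossPerm_apply, crossFun]; split_ifs <;> omega
  have e2 : (crossPerm n (l+1) * crossPerm n l) (x+1) = x + 2 + 1 := by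
    simp only [Equiv.Perm.mul_apply, crossPerm_apply, crossFun]; split_ifs <;> omega
  have key : (crossPerm n (l+1) * crossPerm n l) * Equiv.swap x (x+1) *
      (crossPerm n (l+1) * crossPerm n l)⁻¹ = Equiv.swap (x+2) (x+2+1) := by
    rw [conj_swap, e1, e2]
  rw [← key]
  exact (conj_mem_iff _ hg _).symm

lemma SWaux (hn6 : 6 ≤ n) (hm : 3*n+1 ≤ m) :
    ∀ d x, 1 ≤ x → x + 2*d + 1 ≤ m →
      (Equiv.swap x (x+1) ∈ C n m ↔ Equiv.swap (x+2*d) (x+2*d+1) ∈ C n m) := by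
  intro d
  induction d with
  | zero => intro x hx hxm; simp
  | succ d ih =>
    intro x hx hxm
    have h1 := SWstep hn6 hm (x := x) hx (by omega)
    have h2 := ih (x+2) (by omega) (by omega)
    have e : x + 2 + 2*d = x + 2*(d+1) := by omega
    rw [e] at h2
    exact h1.trans h2

lemma SWall (hn : n % 4 = 2) (hm : 3*n+1 ≤ m) :
    ∀ i, 1 ≤ i → i + 1 ≤ m → Equiv.swap i (i+1) ∈ C n m := by
  intro i hi1 him
  have seedAt : ∀ x0, n/2 ≤ x0 → x0 + n/2 ≤ m → Equiv.swap x0 (x0+1) ∈ C n m := by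
    intro x0 h1 h2
    have h := swap_seed hn hm (j := x0+1-n/2) (by omega) (by omega)
    rw [show x0+1-n/2 + (n-2)/2 = x0 by omega, show x0+1-n/2 + n/2 = x0+1 by omega] at h
    exact h
  rcases eq_or_ne n 2 with h2 | h2
  · subst h2
    have h := seedAt i (by omega) (by omega)
    exact h
  · have hn6 : 6 ≤ n := by omega
    by_cases hlo : i < n/2
    · set d := (n/2 - i + 1)/2 with hd
      have h := (SWaux hn6 hm d i hi1 (by omega)).2
      exact h (seedAt (i+2*d) (by omega) (by omega))
    · by_cases hhi : i + n/2 ≤ m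
      · exact seedAt i (by omega) (by omega)
      · set d := (i + n/2 - m + 1)/2 with hd
        set x0 := i - 2*d with hx0
        have hx0i : x0 + 2*d = i := by omega
        have h := (SWaux hn6 hm d x0 (by omega) (by omega)).1
          (seedAt x0 (by omega) (by omega))
        rw [hx0i] at h
        exact h

lemma supported_mem (hn : n % 4 = 2) (hm : 3*n+1 ≤ m) :
    ∀ k, k ≤ m → ∀ σ : Equiv.Perm ℕ, (∀ i, σ i ≠ i → 1 ≤ i ∧ i ≤ k) → σ ∈ C n m := by
  intro k
  induction k with
  | zero =>
    intro _ σ hσ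
    have : σ = 1 := by
      ext i
      by_contra h
      have := hσ i h
      omega
    rw [this]
    exact one_mem _
  | succ k ih =>
    intro hk σ hσ
    suffices h : ∀ d (σ : Equiv.Perm ℕ), (∀ i, σ i ≠ i → 1 ≤ i ∧ i ≤ k+1) →
        k+1 ≤ σ (k+1) + d → σ ∈ C n m by
      exact h (k+1) σ hσ (by omega)
    intro d
    induction d with
    | zero =>
      intro σ hσ' hd
      have hfix : σ (k+1) = k+1 := by
        rcases eq_or_ne (σ (k+1)) (k+1) with h | h
        · exact h
        · -- the value v = σ (k+1) is also moved, hence ≤ k+1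
          have hv : σ (σ (k+1)) ≠ σ (k+1) := by
            intro hc
            exact h (σ.injective hc)
          have := (hσ' _ hv).2
          omega
      apply ih (by omega)
      intro i hi
      have h1 := hσ' i hi
      refine ⟨h1.1, ?_⟩
      rcases eq_or_ne i (k+1) with rfl | hne
      · exact absurd hfix hi
      · omega
    | succ d ihd =>
      intro σ hσ' hd
      rcases eq_or_ne (σ (k+1)) (k+1) with h | h
      · apply ihd σ hσ' (by omega)
      · set v := σ (k+1) with hv
        have hvmoved : σ v ≠ v := by
          intro hc
          exact h (σ.injective (by rw [hc, ← hv]))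
        have hvb := hσ' v hvmoved
        have hvlt : v < k + 1 := by
          rcases eq_or_ne v (k+1) with h' | h'
          · exact absurd h' h
          · omega
        have hsw : Equiv.swap v (v+1) ∈ C n m := SWall hn hm v hvb.1 (by omega)
        have hτ : Equiv.swap v (v+1) * σ ∈ C n m := by
          apply ihd
          · intro i hi
            by_cases hs : σ i = i
            · have : Equiv.swap v (v+1) i ≠ i := by
                rw [Equiv.Perm.mul_apply, hs] at hi
                exact hi
              rcases Equiv.swap_apply_ne_self_iff.1 this with ⟨_, hiv⟩
              rcases hiv with rfl | rfl
              · exact ⟨hvb.1, by omega⟩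
              · exact ⟨by omega, by omega⟩
            · exact hσ' i hs
          · have : (Equiv.swap v (v+1) * σ) (k+1) = v + 1 := by
              rw [Equiv.Perm.mul_apply, ← hv, Equiv.swap_apply_left]
            rw [this]
            omega
        have hfin : σ = Equiv.swap v (v+1) * (Equiv.swap v (v+1) * σ) := by
          rw [← mul_assoc, Equiv.swap_mul_self, one_mul]
        rw [hfin]
        exact mul_mem hsw hτ


end Main

theorem stmt5 (n : ℕ) (hn : n % 4 = 2) (hn2 : 2 ≤ n)
    (m : ℕ) (hm : 3 * n + 1 ≤ m) :
    (∀ σ : Equiv.Perm ℕ, σ ∈ C n m ↔ (∀ i, σ i ≠ i → 1 ≤ i ∧ i ≤ m)) ∧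
    (∀ i, 1 ≤ i → i + 1 ≤ m → Equiv.swap i (i + 1) ∈ C n m) := by
  have hnm : n ≤ m := by omega
  have hforward : ∀ σ ∈ C n m, ∀ i, σ i ≠ i → 1 ≤ i ∧ i ≤ m := by
    let S : Subgroup (Equiv.Perm ℕ) :=
      { carrier := {τ | ∀ i, τ i ≠ i → 1 ≤ i ∧ i ≤ m}
        one_mem' := by intro i hi; simp at hi
        mul_mem' := by
          intro a b ha hb i hi
          rw [Equiv.Perm.mul_apply] at hi
          by_cases h : b i = i
          · exact ha i (by rwa [h] at hi)
          · exact hb i h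
        inv_mem' := by
          intro a ha i hi
          apply ha
          intro hc
          exact hi (Equiv.Perm.inv_eq_iff_eq.mpr hc.symm) }
    have hle : C n m ≤ S := by
      unfold C
      apply (Subgroup.closure_le S).2
      rintro τ ⟨j, hj1, hj2, rfl⟩
      intro i hi
      simp only [crossPerm_apply, crossFun] at hi
      split_ifs at hi with h
      · exact ⟨by omega, by omega⟩
      · exact absurd rfl hi
    exact fun σ hσ => hle hσ
  constructor
  · intro σ
    exact ⟨hforward σ, fun h => supported_mem hn hm m le_rfl σ h⟩
  · intro i h1 h2
    exact SWall hn hm i h1 h2
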